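/- Let k be a field with char k ≠ 2, λ ∈ k with λ ≠ 0, 1, and S = k[X₁,X₂,X₃,X₄]/(X₃² − X₂² − X₁², X₄² − X₂² − λX₁²), graded by 𝕃 via deg xᵢ = xᵢ. Fix i ∈ {1,2,3,4} and let x ∈ 𝕃 have normal form x = l₁x₁ + l₂x₂ + l₃x₃ + l₄x₄ + l·c with lᵢ = 1 and l ≥ 0. Then multiplication by xᵢ induces a k-linear isomorphism S_{x − xᵢ} ≅ S_x. -/

import Mathlib

/-- The subgroup of relations `2e₁ = 2e₂ = 2e₃ = 2e₄` in `ℤ⁴`. -/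
def Lrel : AddSubgroup (Fin 4 → ℤ) :=
  AddSubgroup.closure
    { (2 : ℤ) • Pi.single (0 : Fin 4) (1 : ℤ) - (2 : ℤ) • Pi.single 1 1,
      (2 : ℤ) • Pi.single (0 : Fin 4) (1 : ℤ) - (2 : ℤ) • Pi.single 2 1,
      (2 : ℤ) • Pi.single (0 : Fin 4) (1 : ℤ) - (2 : ℤ) • Pi.single 3 1 }

/-- The group `𝕃` of type `(2,2,2,2)`. -/
abbrev Lgrp : Type := (Fin 4 → ℤ) ⧸ Lrel

/-- The generators `x₁, x₂, x₃, x₄` of `𝕃`. -/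
def xL (i : Fin 4) : Lgrp := QuotientAddGroup.mk (Pi.single i 1)

/-- The canonical element `c = 2x₁`. -/
def cL : Lgrp := (2 : ℤ) • xL 0

open MvPolynomial

/-- The defining ideal `(X₃² − X₂² − X₁², X₄² − X₂² − λX₁²)`. -/
noncomputable def relIdeal (k : Type*) [Field k] (lam : k) : Ideal (MvPolynomial (Fin 4) k) :=
  Ideal.span
    {(X 2 : MvPolynomial (Fin 4) k) ^ 2 - X 1 ^ 2 - X 0 ^ 2,
     (X 3 : MvPolynomial (Fin 4) k) ^ 2 - X 1 ^ 2 - C lam * X 0 ^ 2}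

/-- The homogeneous coordinate algebra `S` of the weighted projective line of type
`(2,2,2,2;λ)`. -/
abbrev Sring (k : Type*) [Field k] (lam : k) : Type _ :=
  MvPolynomial (Fin 4) k ⧸ relIdeal k lam

/-- The `𝕃`-degree of a monomial exponent `a ∈ ℕ⁴`, namely `Σᵢ aᵢ·xᵢ`. -/
noncomputable def mdeg (a : Fin 4 →₀ ℕ) : Lgrp := ∑ i, (a i : ℤ) • xL i

/-- The homogeneous component `S_x ⊆ S` of degree `x ∈ 𝕃`: the `k`-span of the images in `S`
of the monomials of `𝕃`-degree `x`. -/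
noncomputable def Sx (k : Type*) [Field k] (lam : k) (x : Lgrp) : Submodule k (Sring k lam) :=
  Submodule.span k (Ideal.Quotient.mk (relIdeal k lam) ''
    { m | ∃ a : Fin 4 →₀ ℕ, mdeg a = x ∧ m = monomial a (1 : k) })

/-- The image `xᵢ ∈ S` of the variable `Xᵢ`. -/
noncomputable def xg (k : Type*) [Field k] (lam : k) (i : Fin 4) : Sring k lam :=
  Ideal.Quotient.mk (relIdeal k lam) (X i)

set_option maxHeartbeats 1000000

section Quad
variable {R : Type*} [CommRing R] [Nontrivial R] (s : R)

omit [Nontrivial R] in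
theorem quad_monic : (Polynomial.X ^ 2 - Polynomial.C s).Monic :=
  Polynomial.monic_X_pow_sub_C s two_ne_zero

omit [Nontrivial R] in
theorem quad_root_sq :
    (AdjoinRoot.root (Polynomial.X ^ 2 - Polynomial.C s)) ^ 2 =
      AdjoinRoot.of (Polynomial.X ^ 2 - Polynomial.C s) s := by
  have h := AdjoinRoot.eval₂_root (Polynomial.X ^ 2 - Polynomial.C s)
  simp only [Polynomial.eval₂_sub, Polynomial.eval₂_pow, Polynomial.eval₂_X,
    Polynomial.eval₂_C, sub_eq_zero] at h
  exact h

theorem quad_rep (b : AdjoinRoot (Polynomial.X ^ 2 - Polynomial.C s)) :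
    ∃ a₀ a₁ : R, b = AdjoinRoot.of (Polynomial.X ^ 2 - Polynomial.C s) a₀ +
      AdjoinRoot.of (Polynomial.X ^ 2 - Polynomial.C s) a₁ *
        AdjoinRoot.root (Polynomial.X ^ 2 - Polynomial.C s) := by
  obtain ⟨P, rfl⟩ := AdjoinRoot.mk_surjective b
  refine ⟨(P %ₘ (Polynomial.X ^ 2 - Polynomial.C s)).coeff 0,
    (P %ₘ (Polynomial.X ^ 2 - Polynomial.C s)).coeff 1, ?_⟩
  conv_lhs => rw [← Polynomial.modByMonic_add_div P (Polynomial.X ^ 2 - Polynomial.C s)]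
  rw [map_add, map_mul, AdjoinRoot.mk_self, zero_mul, add_zero]
  have hdeg : (P %ₘ (Polynomial.X ^ 2 - Polynomial.C s)).degree ≤ 1 := by
    have h2 := Polynomial.degree_modByMonic_lt P (quad_monic s)
    rw [Polynomial.degree_X_pow_sub_C (by norm_num)] at h2
    exact Order.lt_succ_iff.mp (by exact_mod_cast h2)
  conv_lhs => rw [Polynomial.eq_X_add_C_of_degree_le_one hdeg]
  rw [map_add, map_mul, AdjoinRoot.mk_C, AdjoinRoot.mk_C, AdjoinRoot.mk_X]
  ring

theorem quad_indep {a₀ a₁ : R}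
    (h : AdjoinRoot.of (Polynomial.X ^ 2 - Polynomial.C s) a₀ +
      AdjoinRoot.of (Polynomial.X ^ 2 - Polynomial.C s) a₁ *
        AdjoinRoot.root (Polynomial.X ^ 2 - Polynomial.C s) = 0) :
    a₀ = 0 ∧ a₁ = 0 := by
  have hmk : AdjoinRoot.mk (Polynomial.X ^ 2 - Polynomial.C s)
      (Polynomial.C a₀ + Polynomial.C a₁ * Polynomial.X) = 0 := by
    rw [map_add, map_mul, AdjoinRoot.mk_C, AdjoinRoot.mk_C, AdjoinRoot.mk_X]; exact h
  rw [AdjoinRoot.mk_eq_zero] at hmk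
  obtain ⟨t, ht⟩ := hmk
  rcases eq_or_ne t 0 with rfl | ht0
  · rw [mul_zero] at ht
    constructor
    · have := congrArg (fun p => Polynomial.coeff p 0) ht; simpa using this
    · have := congrArg (fun p => Polynomial.coeff p 1) ht; simpa using this
  · exfalso
    have hdeg : (Polynomial.C a₀ + Polynomial.C a₁ * Polynomial.X).degree ≤ 1 := by
      refine le_trans (Polynomial.degree_add_le _ _)
        (max_le (le_trans Polynomial.degree_C_le (by norm_num)) ?_)
      refine le_trans (Polynomial.degree_mul_le _ _) ?_
      simpa using add_le_add Polynomial.degree_C_le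
        (le_refl (Polynomial.degree (Polynomial.X : Polynomial R)))
    rw [ht, mul_comm] at hdeg
    rw [(quad_monic s).degree_mul, Polynomial.degree_X_pow_sub_C (by norm_num)] at hdeg
    have h0 : (0 : WithBot ℕ) ≤ t.degree := Polynomial.zero_le_degree_iff.mpr ht0
    have h2 : (2 : WithBot ℕ) ≤ t.degree + 2 := by
      simpa using add_le_add h0 (le_refl (2 : WithBot ℕ))
    have := le_trans h2 hdeg
    norm_num at this

theorem quad_nontrivial : Nontrivial (AdjoinRoot (Polynomial.X ^ 2 - Polynomial.C s)) := by
  refine ⟨0, 1, fun h => ?_⟩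
  have h1 : AdjoinRoot.mk (Polynomial.X ^ 2 - Polynomial.C s) 1 = 0 := by
    rw [map_one, ← h]
  rw [AdjoinRoot.mk_eq_zero] at h1
  obtain ⟨t, ht⟩ := h1
  rcases eq_or_ne t 0 with rfl | ht0
  · rw [mul_zero] at ht; exact one_ne_zero ht
  · have := congrArg Polynomial.degree ht
    rw [mul_comm, (quad_monic s).degree_mul, Polynomial.degree_X_pow_sub_C (by norm_num),
      Polynomial.degree_eq_natDegree ht0, Polynomial.degree_one] at this
    norm_cast at this

theorem quad_reg_of {a : R} (ha : ∀ y, a * y = 0 → y = 0) :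
    ∀ y, AdjoinRoot.of (Polynomial.X ^ 2 - Polynomial.C s) a * y = 0 → y = 0 := by
  intro y hy
  obtain ⟨b₀, b₁, rfl⟩ := quad_rep s y
  have h2 : AdjoinRoot.of (Polynomial.X ^ 2 - Polynomial.C s) (a * b₀) +
      AdjoinRoot.of (Polynomial.X ^ 2 - Polynomial.C s) (a * b₁) *
        AdjoinRoot.root (Polynomial.X ^ 2 - Polynomial.C s) = 0 := by
    rw [map_mul, map_mul]; linear_combination hy
  obtain ⟨h0, h1⟩ := quad_indep s h2
  rw [ha _ h0, ha _ h1]; simp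

theorem quad_reg_root (hs : ∀ y, s * y = 0 → y = 0) :
    ∀ y, AdjoinRoot.root (Polynomial.X ^ 2 - Polynomial.C s) * y = 0 → y = 0 := by
  intro y hy
  obtain ⟨b₀, b₁, rfl⟩ := quad_rep s y
  have key : AdjoinRoot.root (Polynomial.X ^ 2 - Polynomial.C s) *
      (AdjoinRoot.of (Polynomial.X ^ 2 - Polynomial.C s) b₁ *
        AdjoinRoot.root (Polynomial.X ^ 2 - Polynomial.C s)) =
      AdjoinRoot.of (Polynomial.X ^ 2 - Polynomial.C s) (s * b₁) := by
    rw [mul_left_comm, ← sq, quad_root_sq, ← map_mul, mul_comm b₁ s]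
  have h2 : AdjoinRoot.of (Polynomial.X ^ 2 - Polynomial.C s) (s * b₁) +
      AdjoinRoot.of (Polynomial.X ^ 2 - Polynomial.C s) b₀ *
        AdjoinRoot.root (Polynomial.X ^ 2 - Polynomial.C s) = 0 := by
    rw [mul_add, key] at hy; linear_combination hy
  obtain ⟨h0, h1⟩ := quad_indep s h2
  rw [hs _ h0, h1]; simp

end Quad

set_option synthInstance.maxHeartbeats 1000000

noncomputable section Tower
variable (k : Type*) [Field k] (lam : k)

abbrev Aring : Type _ := MvPolynomial (Fin 2) k

def pA : Aring k := MvPolynomial.X 1 ^ 2 + MvPolynomial.X 0 ^ 2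
def qA : Aring k := MvPolynomial.X 1 ^ 2 + MvPolynomial.C lam * MvPolynomial.X 0 ^ 2

abbrev fB : Polynomial (Aring k) := Polynomial.X ^ 2 - Polynomial.C (pA k)
abbrev Bring : Type _ := AdjoinRoot (fB k)
abbrev ofB : Aring k →+* Bring k := AdjoinRoot.of (fB k)

abbrev gC : Polynomial (Bring k) := Polynomial.X ^ 2 - Polynomial.C (ofB k (qA k lam))
abbrev Cring : Type _ := AdjoinRoot (gC k lam)
abbrev ofC : Bring k →+* Cring k lam := AdjoinRoot.of (gC k lam)

theorem pA_ne : pA k ≠ 0 := by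
  intro h
  have := congrArg (MvPolynomial.eval ![0, 1]) h
  simp [pA] at this

theorem qA_ne : qA k lam ≠ 0 := by
  intro h
  have := congrArg (MvPolynomial.eval ![0, 1]) h
  simp [qA] at this

instance : Nontrivial (Bring k) := quad_nontrivial _

theorem regA_reg (a : Aring k) (ha : a ≠ 0) : ∀ y : Aring k, a * y = 0 → y = 0 :=
  fun y hy => (mul_eq_zero.mp hy).resolve_left ha

theorem regB_ofA {a : Aring k} (ha : a ≠ 0) : ∀ y : Bring k, ofB k a * y = 0 → y = 0 :=
  quad_reg_of _ (regA_reg k a ha)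

theorem regB_root : ∀ y : Bring k, AdjoinRoot.root (fB k) * y = 0 → y = 0 :=
  quad_reg_root _ (regA_reg k _ (pA_ne k))

theorem regC_ofB {b : Bring k} (hb : ∀ y : Bring k, b * y = 0 → y = 0) :
    ∀ c : Cring k lam, ofC k lam b * c = 0 → c = 0 :=
  quad_reg_of _ hb

theorem regC_root : ∀ c : Cring k lam, AdjoinRoot.root (gC k lam) * c = 0 → c = 0 :=
  quad_reg_root _ (quad_reg_of _ (regA_reg k _ (qA_ne k lam)))

/-- The four "variable" elements of `Cring`. -/
def varC : Fin 4 → Cring k lam :=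
  ![ofC k lam (ofB k (MvPolynomial.X 0)), ofC k lam (ofB k (MvPolynomial.X 1)),
    ofC k lam (AdjoinRoot.root (fB k)), AdjoinRoot.root (gC k lam)]

theorem varC_reg (i : Fin 4) : ∀ c : Cring k lam, varC k lam i * c = 0 → c = 0 := by
  fin_cases i
  · exact regC_ofB k lam (regB_ofA k (MvPolynomial.X_ne_zero 0))
  · exact regC_ofB k lam (regB_ofA k (MvPolynomial.X_ne_zero 1))
  · exact regC_ofB k lam (regB_root k)
  · exact regC_root k lam

/-- The ring hom `k[X₀..X₃] → Cring`. -/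
def phiC : MvPolynomial (Fin 4) k →+* Cring k lam :=
  MvPolynomial.eval₂Hom ((ofC k lam).comp ((ofB k).comp MvPolynomial.C)) (varC k lam)

theorem phiC_X (i : Fin 4) : phiC k lam (MvPolynomial.X i) = varC k lam i :=
  MvPolynomial.eval₂Hom_X' _ _ _

theorem phiC_rel : ∀ a ∈ relIdeal k lam, phiC k lam a = 0 := by
  intro a ha
  have hspan : relIdeal k lam ≤ RingHom.ker (phiC k lam) := by
    rw [relIdeal, Ideal.span_le]
    rintro g (rfl | rfl) <;> simp only [SetLike.mem_coe, RingHom.mem_ker, map_sub,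
      map_mul, map_pow, phiC, MvPolynomial.eval₂Hom_X', MvPolynomial.eval₂Hom_C,
      RingHom.comp_apply]
    · have h2 : ofC k lam (AdjoinRoot.root (fB k)) ^ 2 =
          ofC k lam (ofB k (pA k)) := by rw [← map_pow, quad_root_sq]
      have h3 : ofC k lam (ofB k (pA k)) = ofC k lam (ofB k (MvPolynomial.X 1 ^ 2)) +
          ofC k lam (ofB k (MvPolynomial.X 0 ^ 2)) := by rw [pA, map_add, map_add]
      have h4 : ofC k lam (ofB k ((MvPolynomial.X 1 : Aring k) ^ 2)) =
          ofC k lam (ofB k (MvPolynomial.X 1)) ^ 2 := by rw [map_pow, map_pow]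
      have h5 : ofC k lam (ofB k ((MvPolynomial.X 0 : Aring k) ^ 2)) =
          ofC k lam (ofB k (MvPolynomial.X 0)) ^ 2 := by rw [map_pow, map_pow]
      show varC k lam 2 ^ 2 - varC k lam 1 ^ 2 - varC k lam 0 ^ 2 = 0
      simp only [varC, Matrix.cons_val_zero, Matrix.cons_val_one, Matrix.head_cons,
        Matrix.cons_val_two, Matrix.tail_cons]
      linear_combination h2 + h3 + h4 + h5
    · have h2 : AdjoinRoot.root (gC k lam) ^ 2 = ofC k lam (ofB k (qA k lam)) :=
        quad_root_sq _
      have h3 : ofC k lam (ofB k (qA k lam)) = ofC k lam (ofB k (MvPolynomial.X 1 ^ 2)) +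
          ofC k lam (ofB k (MvPolynomial.C lam * MvPolynomial.X 0 ^ 2)) := by
        rw [qA, map_add, map_add]
      have h4 : ofC k lam (ofB k ((MvPolynomial.X 1 : Aring k) ^ 2)) =
          ofC k lam (ofB k (MvPolynomial.X 1)) ^ 2 := by rw [map_pow, map_pow]
      have h5 : ofC k lam (ofB k (MvPolynomial.C lam * (MvPolynomial.X 0 : Aring k) ^ 2)) =
          ofC k lam (ofB k (MvPolynomial.C lam)) *
            ofC k lam (ofB k (MvPolynomial.X 0)) ^ 2 := by
        rw [map_mul, map_mul, map_pow, map_pow]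
      show varC k lam 3 ^ 2 - varC k lam 1 ^ 2 -
        ofC k lam (ofB k (MvPolynomial.C lam)) * varC k lam 0 ^ 2 = 0
      simp only [varC, Matrix.cons_val_zero, Matrix.cons_val_one, Matrix.head_cons,
        Matrix.cons_val_three, Matrix.tail_cons]
      linear_combination h2 + h3 + h4 + h5
  exact hspan ha

/-- The induced ring hom `S → Cring`. -/
def psiC : Sring k lam →+* Cring k lam :=
  Ideal.Quotient.lift (relIdeal k lam) (phiC k lam) (phiC_rel k lam)

/-- The ring hom `A → S`. -/
def chiA : Aring k →+* Sring k lam :=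
  MvPolynomial.eval₂Hom ((Ideal.Quotient.mk (relIdeal k lam)).comp MvPolynomial.C)
    ![Ideal.Quotient.mk (relIdeal k lam) (MvPolynomial.X 0),
      Ideal.Quotient.mk (relIdeal k lam) (MvPolynomial.X 1)]

theorem chiA_X0 : chiA k lam (MvPolynomial.X 0) =
    Ideal.Quotient.mk (relIdeal k lam) (MvPolynomial.X 0) := by
  rw [chiA, MvPolynomial.eval₂Hom_X']; rfl

theorem chiA_X1 : chiA k lam (MvPolynomial.X 1) =
    Ideal.Quotient.mk (relIdeal k lam) (MvPolynomial.X 1) := by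
  rw [chiA, MvPolynomial.eval₂Hom_X']; rfl

theorem chiA_pA : chiA k lam (pA k) =
    Ideal.Quotient.mk (relIdeal k lam) (MvPolynomial.X 1 ^ 2 + MvPolynomial.X 0 ^ 2) := by
  rw [pA, map_add, map_pow, map_pow, chiA_X0, chiA_X1, ← map_pow, ← map_pow, ← map_add]

theorem chiA_qA : chiA k lam (qA k lam) =
    Ideal.Quotient.mk (relIdeal k lam)
      (MvPolynomial.X 1 ^ 2 + MvPolynomial.C lam * MvPolynomial.X 0 ^ 2) := by
  have hc : chiA k lam (MvPolynomial.C lam) =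
      Ideal.Quotient.mk (relIdeal k lam) (MvPolynomial.C lam) := by
    rw [chiA, MvPolynomial.eval₂Hom_C]; rfl
  rw [qA, map_add, map_mul, map_pow, map_pow, chiA_X0, chiA_X1, hc, ← map_pow, ← map_pow,
    ← map_mul, ← map_add]

theorem chiA_cond :
    Polynomial.eval₂ (chiA k lam) (Ideal.Quotient.mk (relIdeal k lam) (MvPolynomial.X 2))
      (fB k) = 0 := by
  rw [show (fB k) = Polynomial.X ^ 2 - Polynomial.C (pA k) from rfl]
  rw [Polynomial.eval₂_sub, Polynomial.eval₂_pow, Polynomial.eval₂_X, Polynomial.eval₂_C]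
  rw [chiA_pA, ← map_pow, ← map_sub, Ideal.Quotient.eq_zero_iff_mem]
  apply Ideal.subset_span
  exact Set.mem_insert_iff.mpr (Or.inl (by ring))

def chiB : Bring k →+* Sring k lam := AdjoinRoot.lift (chiA k lam)
  (Ideal.Quotient.mk (relIdeal k lam) (MvPolynomial.X 2)) (chiA_cond k lam)

theorem chiB_cond :
    Polynomial.eval₂ (chiB k lam) (Ideal.Quotient.mk (relIdeal k lam) (MvPolynomial.X 3))
      (gC k lam) = 0 := by
  rw [show (gC k lam) = Polynomial.X ^ 2 - Polynomial.C (ofB k (qA k lam)) from rfl]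
  rw [Polynomial.eval₂_sub, Polynomial.eval₂_pow, Polynomial.eval₂_X, Polynomial.eval₂_C]
  have h1 : chiB k lam (ofB k (qA k lam)) = chiA k lam (qA k lam) := AdjoinRoot.lift_of _
  rw [h1, chiA_qA, ← map_pow, ← map_sub, Ideal.Quotient.eq_zero_iff_mem]
  apply Ideal.subset_span
  exact Set.mem_insert_iff.mpr (Or.inr (Set.mem_singleton_iff.mpr (by ring)))

def chiC : Cring k lam →+* Sring k lam := AdjoinRoot.lift (chiB k lam)
  (Ideal.Quotient.mk (relIdeal k lam) (MvPolynomial.X 3)) (chiB_cond k lam)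

theorem chi_psi : (chiC k lam).comp (psiC k lam) = RingHom.id _ := by
  apply Ideal.Quotient.ringHom_ext
  apply MvPolynomial.ringHom_ext
  · intro r
    simp only [RingHom.comp_apply, RingHom.id_apply, Ideal.Quotient.mk_algebraMap]
    rw [show ((Ideal.Quotient.mk (relIdeal k lam)) : _ →+* Sring k lam) =
      Ideal.Quotient.mk (relIdeal k lam) from rfl]
    rw [psiC, Ideal.Quotient.lift_mk]
    rw [show phiC k lam (MvPolynomial.C r) =
      ofC k lam (ofB k (MvPolynomial.C r)) from MvPolynomial.eval₂Hom_C _ _ _]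
    rw [show ofC k lam = AdjoinRoot.of (gC k lam) from rfl, chiC, AdjoinRoot.lift_of,
      chiB, AdjoinRoot.lift_of]
    rw [chiA, MvPolynomial.eval₂Hom_C]
    rfl
  · intro i
    simp only [RingHom.comp_apply, RingHom.id_apply]
    rw [psiC, Ideal.Quotient.lift_mk, phiC_X]
    fin_cases i
    · show chiC k lam (ofC k lam (ofB k (MvPolynomial.X 0))) = _
      rw [show ofC k lam = AdjoinRoot.of (gC k lam) from rfl, chiC, AdjoinRoot.lift_of,
        chiB, AdjoinRoot.lift_of, chiA_X0]
      rfl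
    · show chiC k lam (ofC k lam (ofB k (MvPolynomial.X 1))) = _
      rw [show ofC k lam = AdjoinRoot.of (gC k lam) from rfl, chiC, AdjoinRoot.lift_of,
        chiB, AdjoinRoot.lift_of, chiA_X1]
      rfl
    · show chiC k lam (ofC k lam (AdjoinRoot.root (fB k))) = _
      rw [show ofC k lam = AdjoinRoot.of (gC k lam) from rfl, chiC, AdjoinRoot.lift_of,
        chiB, AdjoinRoot.lift_root]
      rfl
    · show chiC k lam (AdjoinRoot.root (gC k lam)) = _
      rw [chiC, AdjoinRoot.lift_root]
      rfl

theorem psiC_inj : Function.Injective (psiC k lam) := by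
  intro u v huv
  have := congrArg (chiC k lam) huv
  rwa [← RingHom.comp_apply, ← RingHom.comp_apply, chi_psi, RingHom.id_apply,
    RingHom.id_apply] at this

theorem psiC_xg (i : Fin 4) : psiC k lam (xg k lam i) = varC k lam i := by
  rw [xg, psiC, Ideal.Quotient.lift_mk, phiC_X]

/-- Each `xᵢ` is a nonzerodivisor in `S`. -/
theorem xg_reg (i : Fin 4) : ∀ v : Sring k lam, xg k lam i * v = 0 → v = 0 := by
  intro v hv
  have h1 : psiC k lam (xg k lam i) * psiC k lam v = 0 := by
    rw [← map_mul, hv, map_zero]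
  rw [psiC_xg] at h1
  have h2 : psiC k lam v = 0 := varC_reg k lam i _ h1
  apply psiC_inj k lam
  rw [h2, map_zero]

end Tower

section Parity

/-- The `i`-th parity character `𝕃 → ℤ/2`. -/
def par (i : Fin 4) : Lgrp →+ ZMod 2 :=
  QuotientAddGroup.lift Lrel
    ((Int.castAddHom (ZMod 2)).comp (Pi.evalAddMonoidHom (fun _ : Fin 4 => ℤ) i)) <| by
    intro g hg
    rw [Lrel] at hg
    refine (AddSubgroup.closure_le _).mpr ?_ hg
    rintro y (rfl | rfl | rfl) <;>
      simp only [SetLike.mem_coe, AddMonoidHom.mem_ker, AddMonoidHom.coe_comp,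
        Function.comp_apply, Pi.evalAddMonoidHom_apply, Pi.sub_apply, Pi.smul_apply,
        Pi.single_apply, smul_eq_mul, Int.coe_castAddHom] <;>
      push_cast <;>
      rw [show (2 : ZMod 2) = 0 by decide] <;>
      ring

theorem par_xL (i j : Fin 4) : par i (xL j) = if i = j then 1 else 0 := by
  rw [xL, par]
  rw [QuotientAddGroup.lift_mk]
  simp [Pi.single_apply]

theorem par_cL (i : Fin 4) : par i cL = 0 := by
  rw [cL, map_zsmul, par_xL]
  rcases ite_eq_or_eq (i = (0 : Fin 4)) (1 : ZMod 2) 0 with h | h <;> rw [h] <;> decide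

theorem mdeg_add (a b : Fin 4 →₀ ℕ) : mdeg (a + b) = mdeg a + mdeg b := by
  rw [mdeg, mdeg, mdeg, ← Finset.sum_add_distrib]
  refine Finset.sum_congr rfl fun j _ => ?_
  rw [Finsupp.add_apply]
  push_cast
  rw [add_zsmul]

theorem mdeg_single (i : Fin 4) : mdeg (Finsupp.single i 1) = xL i := by
  rw [mdeg]
  rw [Finset.sum_eq_single i]
  · simp
  · intro j _ hj
    rw [Finsupp.single_apply, if_neg (fun h => hj h.symm)]
    simp
  · simp

theorem par_mdeg (i : Fin 4) (a : Fin 4 →₀ ℕ) : par i (mdeg a) = (a i : ZMod 2) := by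
  rw [mdeg, map_sum]
  rw [Finset.sum_eq_single i]
  · rw [map_zsmul, par_xL, if_pos rfl, zsmul_eq_mul, mul_one]
    push_cast
    ring
  · intro j _ hj
    rw [map_zsmul, par_xL, if_neg (fun h => hj h.symm), smul_zero]
  · simp

end Parity

/-- If `x = Σⱼ lⱼxⱼ + l·c` is in normal form with `lᵢ = 1` and `l ≥ 0`, then multiplication
by `xᵢ` induces a `k`-linear isomorphism `S_{x − xᵢ} ≅ S_x`: it maps `S_{x − xᵢ}` onto `S_x`
and is injective on `S_{x − xᵢ}`. -/
theorem mul_xi_iso (k : Type*) [Field k] (hchar : ringChar k ≠ 2)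
    (lam : k) (h0 : lam ≠ 0) (h1 : lam ≠ 1)
    (i : Fin 4) (l : Fin 4 → ℤ) (m : ℤ) (hl : ∀ j, l j = 0 ∨ l j = 1)
    (hi : l i = 1) (hm : 0 ≤ m)
    (x : Lgrp) (hx : x = ∑ j, l j • xL j + m • cL) :
    Submodule.map (LinearMap.mulLeft k (xg k lam i)) (Sx k lam (x - xL i)) = Sx k lam x ∧
    ∀ v ∈ Sx k lam (x - xL i), xg k lam i * v = 0 → v = 0 := by
  constructor
  · apply le_antisymm
    · rw [Sx, Sx, Submodule.map_span]
      refine Submodule.span_le.mpr ?_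
      rintro w ⟨w', ⟨m', ⟨a, ha, rfl⟩, rfl⟩, rfl⟩
      refine Submodule.subset_span
        ⟨monomial (a + Finsupp.single i 1) 1, ⟨a + Finsupp.single i 1, ?_, rfl⟩, ?_⟩
      · rw [mdeg_add, mdeg_single, ha, sub_add_cancel]
      · rw [LinearMap.mulLeft_apply, xg, ← map_mul, X, monomial_mul, one_mul, add_comm]
    · rw [Sx]
      refine Submodule.span_le.mpr ?_
      rintro w ⟨m', ⟨a, ha, rfl⟩, rfl⟩
      have hpar : (a i : ZMod 2) = 1 := by
        rw [← par_mdeg, ha, hx, map_add, map_zsmul, par_cL, smul_zero, add_zero, map_sum,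
          Finset.sum_eq_single i]
        · rw [map_zsmul, par_xL, if_pos rfl, hi, one_zsmul]
        · intro j _ hj
          rw [map_zsmul, par_xL, if_neg (fun h => hj h.symm), smul_zero]
        · simp
      have hai : 1 ≤ a i := by
        rcases Nat.eq_zero_or_pos (a i) with h' | h'
        · rw [h', Nat.cast_zero] at hpar
          exact absurd hpar (by decide)
        · exact h'
      have hle : Finsupp.single i 1 ≤ a := Finsupp.single_le_iff.mpr hai
      have hba : a - Finsupp.single i 1 + Finsupp.single i 1 = a := tsub_add_cancel_of_le hle
      have hdb : mdeg (a - Finsupp.single i 1) = x - xL i := by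
        have := congrArg mdeg hba
        rw [mdeg_add, mdeg_single, ha] at this
        exact eq_sub_of_add_eq this
      refine Submodule.mem_map.mpr
        ⟨Ideal.Quotient.mk (relIdeal k lam) (monomial (a - Finsupp.single i 1) 1),
          Submodule.subset_span ⟨_, ⟨a - Finsupp.single i 1, hdb, rfl⟩, rfl⟩, ?_⟩
      rw [LinearMap.mulLeft_apply, xg, ← map_mul, X, monomial_mul, one_mul, add_comm, hba]
  · intro v _ hv
    exact xg_reg k lam i v hv
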